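/- For any isometric subtree $H$ of a graph $G$ (a subtree such that $d_H(u,v) = d_G(u,v)$ for all vertices $u,v$ of $H$), we have $b(H) \le b(G)$. -/

import Mathlib

open SimpleGraph

/-- A burning sequence of length `k` (0-indexed: `x 0, …, x (k-1)`):
the distance conditions and the covering condition. -/
def IsBurnSeq {V : Type*} (G : SimpleGraph V) (k : ℕ) (x : ℕ → V) : Prop :=
  (∀ i j : ℕ, i < j → j < k → (↑(j - i) : ℕ∞) ≤ G.edist (x i) (x j)) ∧
  (∀ v : V, ∃ i < k, G.edist (x i) v ≤ (↑(k - 1 - i) : ℕ∞))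

/-- The burning number of a graph: the least length of a burning sequence. -/
noncomputable def burningNumber {V : Type*} (G : SimpleGraph V) : ℕ :=
  sInf {k | ∃ x : ℕ → V, IsBurnSeq G k x}

section Greedy

variable {V : Type*} (G : SimpleGraph V) (c : ℕ → V)

open Classical in
/-- Greedy burning prefix: `greedyVec G c i j h` is the `j`-th source (`j < i`). -/
noncomputable def greedyVec : (i : ℕ) → (j : ℕ) → j < i → V
  | 0 => fun j hh => absurd hh (Nat.not_lt_zero j)
  | i + 1 => fun j h =>
    if hj : j < i then greedyVec i j hj
    else
      if (∀ l, (hl : l < i) → (↑(i - l) : ℕ∞) ≤ G.edist (greedyVec i l hl) (c i)) then c i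
      else if h2 : ∃ u : V, ∀ l, (hl : l < i) →
          ¬ (G.edist (greedyVec i l hl) u ≤ ((i - 1 - l : ℕ) : ℕ∞)) then h2.choose
      else c i

/-- The greedy burning sequence. -/
noncomputable def greedyBurn (i : ℕ) : V :=
  greedyVec G c (i + 1) i (Nat.lt_succ_self i)

lemma greedyVec_eq (i j : ℕ) (h : j < i) :
    greedyVec G c i j h = greedyBurn G c j := by
  induction i with
  | zero => exact absurd h (Nat.not_lt_zero j)
  | succ i ih =>
    by_cases hj : j < i
    · rw [show greedyVec G c (i+1) j h = greedyVec G c i j hj from dif_pos hj, ih hj]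
    · have hji : j = i := by omega
      subst hji
      rfl

open Classical in
lemma greedyBurn_spec (i : ℕ) :
    (greedyBurn G c i = c i ∧
      (∀ l, l < i → (↑(i - l) : ℕ∞) ≤ G.edist (greedyBurn G c l) (c i))) ∨
    ((∃ l, l < i ∧ ¬ ((↑(i - l) : ℕ∞) ≤ G.edist (greedyBurn G c l) (c i))) ∧
      ((∃ u : V, ∀ l, l < i → ¬ (G.edist (greedyBurn G c l) u ≤ ((i - 1 - l : ℕ) : ℕ∞))) →
        (∀ l, l < i → ¬ (G.edist (greedyBurn G c l) (greedyBurn G c i) ≤ ((i - 1 - l : ℕ) : ℕ∞))))) := by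
  have hx : greedyBurn G c i = greedyVec G c (i+1) i (Nat.lt_succ_self i) := rfl
  rw [hx]
  have hni : ¬ i < i := lt_irrefl i
  rw [show greedyVec G c (i+1) i (Nat.lt_succ_self i) =
      (if (∀ l, (hl : l < i) → (↑(i - l) : ℕ∞) ≤ G.edist (greedyVec G c i l hl) (c i)) then c i
      else if h2 : ∃ u : V, ∀ l, (hl : l < i) →
          ¬ (G.edist (greedyVec G c i l hl) u ≤ ((i - 1 - l : ℕ) : ℕ∞)) then h2.choose
      else c i) from dif_neg hni]
  simp only [greedyVec_eq]
  by_cases h1 : ∀ l, l < i → (↑(i - l) : ℕ∞) ≤ G.edist (greedyBurn G c l) (c i)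
  · rw [if_pos (fun l hl => h1 l hl)]
    exact Or.inl ⟨rfl, h1⟩
  · rw [if_neg (fun h => h1 (fun l hl => h l hl))]
    push_neg at h1
    obtain ⟨l0, hl0, hlt0⟩ := h1
    refine Or.inr ⟨⟨l0, hl0, not_le.mpr hlt0⟩, fun hu => ?_⟩
    have h2 : ∃ u : V, ∀ l, (hl : l < i) →
        ¬ (G.edist (greedyBurn G c l) u ≤ ((i - 1 - l : ℕ) : ℕ∞)) := by
      obtain ⟨u, hu⟩ := hu
      exact ⟨u, fun l hl => hu l hl⟩
    rw [dif_pos h2]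
    exact fun l hl => h2.choose_spec l hl

lemma unburned_spaced {e : ℕ∞} {i l : ℕ} (hl : l < i)
    (h : ¬ (e ≤ ((i - 1 - l : ℕ) : ℕ∞))) : ((i - l : ℕ) : ℕ∞) ≤ e := by
  have h1 : ((i - 1 - l : ℕ) : ℕ∞) < e := not_le.mp h
  have h2 : ((i - 1 - l : ℕ) : ℕ∞) + 1 ≤ e := Order.add_one_le_of_lt h1
  have h4 : i - l = (i - 1 - l) + 1 := by omega
  rw [h4, Nat.cast_add, Nat.cast_one]
  exact h2

/-- From a cover by balls of radii `k-1, …, 0` one obtains a burning sequence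
of length at most `k`. -/
lemma exists_burnSeq_of_cover {V : Type*} (G : SimpleGraph V) (k : ℕ) (c : ℕ → V)
    (hc : ∀ v : V, ∃ i < k, G.edist (c i) v ≤ ((k - 1 - i : ℕ) : ℕ∞)) :
    ∃ m ≤ k, ∃ x : ℕ → V, IsBurnSeq G m x := by
  set B : Set ℕ := {i | ∀ v : V, ∃ j < i,
    G.edist (greedyBurn G c j) v ≤ ((i - 1 - j : ℕ) : ℕ∞)} with hB
  have hBk : k ∈ B := by
    intro v
    obtain ⟨i, hik, hi⟩ := hc v
    rcases greedyBurn_spec G c i with ⟨hxi, _⟩ | ⟨⟨j, hj, hlt⟩, _⟩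
    · exact ⟨i, hik, by rw [hxi]; exact hi⟩
    · refine ⟨j, by omega, ?_⟩
      have hji : G.edist (greedyBurn G c j) (c i) ≤ ((i - 1 - j : ℕ) : ℕ∞) := by
        have h1 : G.edist (greedyBurn G c j) (c i) < ((i - j : ℕ) : ℕ∞) := not_le.mp hlt
        have h2 : i - j = (i - 1 - j) + 1 := by omega
        rw [h2, Nat.cast_add, Nat.cast_one] at h1
        exact Order.le_of_lt_add_one h1
      calc G.edist (greedyBurn G c j) v
            ≤ G.edist (greedyBurn G c j) (c i) + G.edist (c i) v :=
            SimpleGraph.edist_triangle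
        _ ≤ ((i - 1 - j : ℕ) : ℕ∞) + ((k - 1 - i : ℕ) : ℕ∞) := add_le_add hji hi
        _ = ((i - 1 - j + (k - 1 - i) : ℕ) : ℕ∞) := (Nat.cast_add _ _).symm
        _ ≤ ((k - 1 - j : ℕ) : ℕ∞) := by
            rw [Nat.cast_le]; omega
  have hne : B.Nonempty := ⟨k, hBk⟩
  refine ⟨sInf B, Nat.sInf_le hBk, greedyBurn G c, ?_, Nat.sInf_mem hne⟩
  intro i j hij hjm
  have hnBj : j ∉ B := Nat.notMem_of_lt_sInf hjm
  have hex : ∃ u : V, ∀ l, l < j →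
      ¬ (G.edist (greedyBurn G c l) u ≤ ((j - 1 - l : ℕ) : ℕ∞)) := by
    simp only [hB, Set.mem_setOf_eq, not_forall, not_exists] at hnBj
    obtain ⟨v, hv⟩ := hnBj
    exact ⟨v, fun l hl h => (hv l) ⟨hl, h⟩⟩
  rcases greedyBurn_spec G c j with ⟨hxj, hsp⟩ | ⟨_, hunb⟩
  · rw [hxj]
    exact hsp i hij
  · exact unburned_spaced hij (hunb hex i hij)

end Greedy

section TreeCenter

variable {W : Type*} {T : SimpleGraph W}

lemma dist_getVert_le (hc : T.Connected) {u v : W} (p : T.Walk u v) :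
    ∀ i : ℕ, T.dist u (p.getVert i) ≤ i := by
  intro i
  induction i with
  | zero => simp [Walk.getVert_zero]
  | succ n ih =>
    by_cases h : n < p.length
    · have hadj := p.adj_getVert_succ h
      calc T.dist u (p.getVert (n + 1))
          ≤ T.dist u (p.getVert n) + T.dist (p.getVert n) (p.getVert (n + 1)) :=
            hc.dist_triangle
        _ ≤ n + 1 := add_le_add ih (le_of_eq (SimpleGraph.dist_eq_one_iff_adj.mpr hadj))
    · have h1 : p.getVert (n + 1) = p.getVert n := by
        rw [p.getVert_of_length_le (by omega), p.getVert_of_length_le (by omega)]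
      rw [h1]
      exact ih.trans (Nat.le_succ n)

/-- In a tree, a set of diameter at most `2r` is contained in a ball of radius `r`. -/
lemma tree_center (hT : T.IsTree) (A : Set W) (hfin : A.Finite) (hA : A.Nonempty) (r : ℕ)
    (hd : ∀ u ∈ A, ∀ v ∈ A, T.dist u v ≤ 2 * r) :
    ∃ c : W, ∀ v ∈ A, T.dist c v ≤ r := by
  classical
  have hconn := hT.isConnected
  obtain ⟨⟨u, v⟩, huv, hmax⟩ :=
    Set.exists_max_image (A ×ˢ A) (fun p => T.dist p.1 p.2) (hfin.prod hfin) (hA.prod hA)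
  obtain ⟨hu, hv⟩ := huv
  set D := T.dist u v with hD
  have hDr : D ≤ 2 * r := hd u hu v hv
  obtain ⟨P, hPpath, hPlen⟩ := hconn.exists_path_of_dist u v
  set q := (D + 1) / 2 with hq
  have hqD : q ≤ D := by omega
  set c := P.getVert q with hc
  have h1 : T.dist u c ≤ q := dist_getVert_le hconn P q
  have h2 : T.dist c v ≤ D - q := by
    have hrev : P.reverse.getVert (D - q) = c := by
      rw [Walk.getVert_reverse, hPlen]
      congr 1
      omega
    have := dist_getVert_le hconn P.reverse (D - q)
    rw [hrev] at this
    rwa [SimpleGraph.dist_comm]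
  have h3 : D ≤ T.dist u c + T.dist c v := hconn.dist_triangle
  have hq1 : T.dist u c = q := by omega
  have hq2 : T.dist c v = D - q := by omega
  refine ⟨c, fun w hw => ?_⟩
  have hwu : T.dist u w ≤ D := hmax (u, w) ⟨hu, hw⟩
  have hwv : T.dist w v ≤ D := hmax (w, v) ⟨hw, hv⟩
  obtain ⟨Q, hQpath, hQlen⟩ := hconn.exists_path_of_dist u w
  obtain ⟨R, hRpath, hRlen⟩ := hconn.exists_path_of_dist w v
  have hcP : c ∈ P.support := by
    rw [Walk.mem_support_iff_exists_getVert]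
    exact ⟨q, rfl, by omega⟩
  have hbp : (Q.append R).bypass = P := by
    have h := hT.IsAcyclic.path_unique ⟨(Q.append R).bypass, Walk.bypass_isPath _⟩ ⟨P, hPpath⟩
    exact congrArg Subtype.val h
  have hcS : c ∈ (Q.append R).support := by
    apply Walk.support_bypass_subset
    rw [hbp]
    exact hcP
  rw [Walk.mem_support_append_iff] at hcS
  rcases hcS with hcQ | hcR
  · have hsplit := Q.take_spec hcQ
    have hlen : (Q.takeUntil c hcQ).length + (Q.dropUntil c hcQ).length = Q.length := by
      rw [← Walk.length_append, hsplit]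
    have d1 : T.dist u c ≤ (Q.takeUntil c hcQ).length := SimpleGraph.dist_le _
    have d2 : T.dist c w ≤ (Q.dropUntil c hcQ).length := SimpleGraph.dist_le _
    omega
  · have hsplit := R.take_spec hcR
    have hlen : (R.takeUntil c hcR).length + (R.dropUntil c hcR).length = R.length := by
      rw [← Walk.length_append, hsplit]
    have d1 : T.dist w c ≤ (R.takeUntil c hcR).length := SimpleGraph.dist_le _
    have d2 : T.dist c v ≤ (R.dropUntil c hcR).length := SimpleGraph.dist_le _
    have hcw : T.dist c w = T.dist w c := SimpleGraph.dist_comm ..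
    omega

end TreeCenter

/-- For any isometric subtree `H = G.induce s` of a graph `G`, `b(H) ≤ b(G)`. -/
theorem stmt_6 {V : Type*} [Fintype V] (G : SimpleGraph V) (s : Set V)
    (htree : (G.induce s).IsTree)
    (hiso : ∀ u v : s, (G.induce s).edist u v = G.edist (u : V) (v : V)) :
    burningNumber (G.induce s) ≤ burningNumber G := by
  set H := G.induce s with hH
  have hconn : H.Connected := htree.isConnected
  haveI : Nonempty ↥s := hconn.nonempty
  haveI : Nonempty V := ⟨(Classical.arbitrary ↥s : ↥s).1⟩
  -- the set of burning lengths of G is nonempty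
  have hGne : {k | ∃ x : ℕ → V, IsBurnSeq G k x}.Nonempty := by
    set n := Fintype.card V with hn
    have hnpos : 0 < n := Fintype.card_pos
    set e := Fintype.equivFin V with he
    set c : ℕ → V := fun i => if h : i < n then e.symm ⟨i, h⟩ else e.symm ⟨0, hnpos⟩ with hcdef
    have hc : ∀ v : V, ∃ i < n, G.edist (c i) v ≤ ((n - 1 - i : ℕ) : ℕ∞) := by
      intro v
      refine ⟨(e v : ℕ), (e v).2, ?_⟩
      have : c (e v : ℕ) = v := by
        rw [hcdef]
        simp only [dif_pos (show (e v : ℕ) < n from (e v).2)]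
        rw [show (⟨(e v : ℕ), (e v).2⟩ : Fin n) = e v from Fin.ext rfl]
        exact e.symm_apply_apply v
      rw [this, SimpleGraph.edist_self]
      exact zero_le
    obtain ⟨m, _, x, hx⟩ := exists_burnSeq_of_cover G n c hc
    exact ⟨m, x, hx⟩
  set k := burningNumber G with hk
  have hkmem : k ∈ {k | ∃ x : ℕ → V, IsBurnSeq G k x} := Nat.sInf_mem hGne
  obtain ⟨x, hx⟩ := hkmem
  -- transfer the cover to H using tree centers
  have key : ∀ i : ℕ, ∃ y : ↥s, ∀ v : ↥s,
      G.edist (x i) ↑v ≤ ((k - 1 - i : ℕ) : ℕ∞) → H.edist y v ≤ ((k - 1 - i : ℕ) : ℕ∞) := by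
    intro i
    set r := k - 1 - i with hr
    set A : Set ↥s := {v | G.edist (x i) ↑v ≤ ((r : ℕ) : ℕ∞)} with hA
    by_cases hAne : A.Nonempty
    · have hdiam : ∀ u ∈ A, ∀ v ∈ A, H.dist u v ≤ 2 * r := by
        intro u hu v hv
        have h1 : H.edist u v ≤ ((2 * r : ℕ) : ℕ∞) := by
          rw [hH, hiso u v]
          calc G.edist ↑u ↑v ≤ G.edist ↑u (x i) + G.edist (x i) ↑v :=
                SimpleGraph.edist_triangle
            _ ≤ ((r : ℕ) : ℕ∞) + ((r : ℕ) : ℕ∞) := by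
                refine add_le_add ?_ hv
                rw [SimpleGraph.edist_comm]
                exact hu
            _ = ((2 * r : ℕ) : ℕ∞) := by
                rw [← Nat.cast_add, Nat.cast_inj]
                omega
        exact ENat.toNat_le_of_le_coe h1
      obtain ⟨cc, hcc⟩ := tree_center htree A (Set.toFinite A) hAne r hdiam
      refine ⟨cc, fun v hv => ?_⟩
      have hne : H.edist cc v ≠ ⊤ :=
        SimpleGraph.edist_ne_top_iff_reachable.mpr (hconn cc v)
      rw [← ENat.coe_toNat hne]
      exact Nat.cast_le.mpr (hcc v hv)
    · exact ⟨Classical.arbitrary ↥s, fun v hv => absurd ⟨v, hv⟩ hAne⟩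
  set y : ℕ → ↥s := fun i => (key i).choose with hy
  have coverH : ∀ v : ↥s, ∃ i < k, H.edist (y i) v ≤ ((k - 1 - i : ℕ) : ℕ∞) := by
    intro v
    obtain ⟨i, hik, hi⟩ := hx.2 ↑v
    exact ⟨i, hik, (key i).choose_spec v hi⟩
  obtain ⟨m, hmk, xs, hxs⟩ := exists_burnSeq_of_cover H k y coverH
  calc burningNumber H ≤ m := Nat.sInf_le ⟨xs, hxs⟩
    _ ≤ k := hmk
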